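/- If a topological group X contains a separable closed normal subgroup H such that the quotient group X/H is precompact, then X is preseparable. -/

import Mathlib

open Pointwise

theorem stmt15 (X : Type*) [Group X] [TopologicalSpace X] [IsTopologicalGroup X]
    (H : Subgroup X) [H.Normal] (hclosed : IsClosed (H : Set X))
    (hsep : TopologicalSpace.SeparableSpace H)
    (hprecomp : ∀ U ∈ nhds (1 : X ⧸ H), ∃ F : Set (X ⧸ H), F.Finite ∧ F * U = Set.univ) :
    ∃ S : Set X, S.Countable ∧ ∀ U ∈ nhds (1 : X),
      ∃ F : Set X, F.Finite ∧ S * U * F = Set.univ ∧ F * U * S = Set.univ := by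
  obtain ⟨D, hDc, hDd⟩ := TopologicalSpace.exists_countable_dense H
  refine ⟨Subtype.val '' D, hDc.image _, ?_⟩
  intro U hU
  obtain ⟨V, hVo, hV1, hVU⟩ := exists_open_nhds_one_mul_subset hU
  set W := V ∩ V⁻¹ with hWdef
  have hWo : IsOpen W := hVo.inter hVo.inv
  have hW1 : (1 : X) ∈ W := ⟨hV1, by simpa using hV1⟩
  have hWsymm : ∀ w ∈ W, w⁻¹ ∈ W := by
    rintro w ⟨h1, h2⟩
    exact ⟨by simpa using h2, by simpa using h1⟩
  have hWU : W * W ⊆ U := fun z hz => by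
    obtain ⟨a, ha, b, hb, rfl⟩ := hz
    exact hVU ⟨a, ha.1, b, hb.1, rfl⟩
  -- density lemma
  have hHsub : ∀ h : X, h ∈ H →
      (∃ d ∈ D, ∃ w ∈ W, h = (d : X) * w) ∧ (∃ w ∈ W, ∃ d ∈ D, h = w * (d : X)) := by
    intro h hh
    constructor
    · have ho : IsOpen ((fun z => h * z) '' W) := (isOpenMap_mul_left h) W hWo
      have ho' : IsOpen ((Subtype.val ⁻¹' ((fun z => h * z) '' W)) : Set H) :=
        ho.preimage continuous_subtype_val
      obtain ⟨d, hdD, hdmem⟩ := hDd.exists_mem_open ho'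
        ⟨⟨h, hh⟩, ⟨1, hW1, mul_one h⟩⟩
      obtain ⟨w, hwW, hwe⟩ := hdmem
      refine ⟨d, hdD, w⁻¹, hWsymm w hwW, ?_⟩
      rw [← hwe]; group
    · have ho : IsOpen ((fun z => z * h) '' W) := (isOpenMap_mul_right h) W hWo
      have ho' : IsOpen ((Subtype.val ⁻¹' ((fun z => z * h) '' W)) : Set H) :=
        ho.preimage continuous_subtype_val
      obtain ⟨d, hdD, hdmem⟩ := hDd.exists_mem_open ho'
        ⟨⟨h, hh⟩, ⟨1, hW1, one_mul h⟩⟩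
      obtain ⟨w, hwW, hwe⟩ := hdmem
      refine ⟨w⁻¹, hWsymm w hwW, d, hdD, ?_⟩
      rw [← hwe]; group
  -- quotient
  have hπW : ((↑) '' W : Set (X ⧸ H)) ∈ nhds (1 : X ⧸ H) :=
    (QuotientGroup.isOpenMap_coe W hWo).mem_nhds ⟨1, hW1, by simp⟩
  obtain ⟨F', hF'fin, hF'⟩ := hprecomp _ hπW
  set F : Set X := (Quotient.out '' F') ∪ (Quotient.out '' F')⁻¹ with hFdef
  have hFfin : F.Finite := (hF'fin.image _).union (hF'fin.image _).inv
  refine ⟨F, hFfin, ?_, ?_⟩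
  · apply Set.eq_univ_iff_forall.2
    intro x
    have hx : ((x⁻¹ : X) : X ⧸ H) ∈ F' * (((↑) : X → X ⧸ H) '' W) := by
      rw [hF']; trivial
    obtain ⟨q, hqF', p, ⟨w, hwW, rfl⟩, hqp⟩ := hx
    have hq : ((q.out : X) : X ⧸ H) = q := Quotient.out_eq' q
    have hmem : (q.out * w)⁻¹ * x⁻¹ ∈ H := by
      rw [← QuotientGroup.eq, QuotientGroup.mk_mul, hq]
      exact hqp
    set h := (q.out * w)⁻¹ * x⁻¹ with hhdef
    have hxeq : x = h⁻¹ * w⁻¹ * q.out⁻¹ := by rw [hhdef]; group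
    obtain ⟨⟨d, hdD, w', hw'W, hdw⟩, -⟩ := hHsub h⁻¹ (H.inv_mem hmem)
    refine ⟨(d : X) * (w' * w⁻¹), ⟨d, ⟨d, hdD, rfl⟩, w' * w⁻¹,
      hWU ⟨w', hw'W, w⁻¹, hWsymm w hwW, rfl⟩, rfl⟩, q.out⁻¹,
      Or.inr (by rw [Set.mem_inv, inv_inv]; exact ⟨q, hqF', rfl⟩), ?_⟩
    rw [hxeq, hdw]; group
  · apply Set.eq_univ_iff_forall.2
    intro x
    have hx : ((x : X) : X ⧸ H) ∈ F' * (((↑) : X → X ⧸ H) '' W) := by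
      rw [hF']; trivial
    obtain ⟨q, hqF', p, ⟨w, hwW, rfl⟩, hqp⟩ := hx
    have hq : ((q.out : X) : X ⧸ H) = q := Quotient.out_eq' q
    have hmem : (q.out * w)⁻¹ * x ∈ H := by
      rw [← QuotientGroup.eq, QuotientGroup.mk_mul, hq]
      exact hqp
    set h := (q.out * w)⁻¹ * x with hhdef
    have hxeq : x = q.out * w * h := by rw [hhdef]; group
    obtain ⟨-, ⟨w', hw'W, d, hdD, hdw⟩⟩ := hHsub h hmem
    refine ⟨q.out * (w * w'), ⟨q.out, Or.inl ⟨q, hqF', rfl⟩, w * w',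
      hWU ⟨w, hwW, w', hw'W, rfl⟩, rfl⟩, (d : X), ⟨d, hdD, rfl⟩, ?_⟩
    rw [hxeq, hdw]; group
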